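/- arXiv:2505.08624 — 3 statements merged into one kernel-verified Lean document; each statement's English description precedes it below -/
import Mathlib

section
/- Let n ≥ 5 and θ = (θ_x, θ_1, ..., θ_5, θ_y) ∈ ℤ^7 (n = 5 case). Let 𝓘 = {I ⊆ {1,...,5} : {1,2} ⊆ I or {3,4,5} ⊆ I} and 𝓙 = {J ⊆ {1,...,5} : J ∩ {1,2} ≠ ∅ and J ∩ {3,4,5} ≠ ∅}. Suppose θ_x + θ_1 + ... + θ_5 + θ_y = 0, θ_i ≤ 0 for all i ∈ {1,...,5}, θ_x + Σ_{i∈I} θ_i ≤ 0 for all I ∈ 𝓘, and θ_y + Σ_{j∈J} θ_j ≤ 0 for all J ∈ 𝓙. Then θ = 0. -/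
/-- Five-pointed star lemma: coordinates of `θ ∈ ℤ^7` indexed by `{x,1,...,5,y}`,
with `x = 0`, vertex `i` at index `i` (via `Fin 5 → Fin 7`, `i ↦ i + 1`), `y = 6`.
If `θ` sums to zero, `θ_i ≤ 0` for `i ∈ {1,...,5}`,
`θ_x + Σ_{i ∈ I} θ_i ≤ 0` for all `I ∈ 𝓘 = {I : {1,2} ⊆ I or {3,4,5} ⊆ I}`, and
`θ_y + Σ_{j ∈ J} θ_j ≤ 0` for all `J ∈ 𝓙 = {J : J ∩ {1,2} ≠ ∅ and J ∩ {3,4,5} ≠ ∅}`,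
then `θ = 0`.  (Subsets of `{1,...,5}` are `Finset (Fin 5)`, where `0,1` correspond to
vertices `1,2` and `2,3,4` to vertices `3,4,5`.) -/
theorem stmt3 (θ : Fin 7 → ℤ)
    (hsum : ∑ v, θ v = 0)
    (hneg : ∀ i : Fin 5, θ i.succ.castSucc ≤ 0)
    (hI : ∀ I : Finset (Fin 5),
      (({0, 1} : Finset (Fin 5)) ⊆ I ∨ ({2, 3, 4} : Finset (Fin 5)) ⊆ I) →
      θ 0 + ∑ i ∈ I, θ i.succ.castSucc ≤ 0)
    (hJ : ∀ J : Finset (Fin 5),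
      ((J ∩ ({0, 1} : Finset (Fin 5))).Nonempty ∧
        (J ∩ ({2, 3, 4} : Finset (Fin 5))).Nonempty) →
      θ 6 + ∑ i ∈ J, θ i.succ.castSucc ≤ 0) :
    θ = 0 := by
  have n0 := hneg 0
  have n1 := hneg 1
  have n2 := hneg 2
  have n3 := hneg 3
  have n4 := hneg 4
  have hI1 := hI {0,1} (Or.inl (by decide))
  have hI2 := hI {2,3,4} (Or.inr (by decide))
  have hI3 := hI {1,2,3,4} (Or.inr (by decide))
  have hI4 := hI {0,2,3,4} (Or.inr (by decide))
  have hI5 := hI {0,1,3,4} (Or.inl (by decide))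
  have hI6 := hI {0,1,2,4} (Or.inl (by decide))
  have hI7 := hI {0,1,2,3} (Or.inl (by decide))
  have hIf := hI Finset.univ (Or.inl (by decide))
  have hJ1 := hJ {0,2} ⟨⟨0, by decide⟩, ⟨2, by decide⟩⟩
  have hJ2 := hJ {1,3} ⟨⟨1, by decide⟩, ⟨3, by decide⟩⟩
  have hJ3 := hJ {0,4} ⟨⟨0, by decide⟩, ⟨4, by decide⟩⟩
  have hJ4 := hJ {1,2} ⟨⟨1, by decide⟩, ⟨2, by decide⟩⟩
  have hJ5 := hJ {0,3} ⟨⟨0, by decide⟩, ⟨3, by decide⟩⟩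
  have hJ6 := hJ {1,4} ⟨⟨1, by decide⟩, ⟨4, by decide⟩⟩
  have hJ7 := hJ {1,2,3,4} ⟨⟨1, by decide⟩, ⟨2, by decide⟩⟩
  have hJ8 := hJ {0,2,3,4} ⟨⟨0, by decide⟩, ⟨2, by decide⟩⟩
  have hJ9 := hJ {0,1,3,4} ⟨⟨0, by decide⟩, ⟨3, by decide⟩⟩
  have hJ10 := hJ {0,1,2,4} ⟨⟨0, by decide⟩, ⟨2, by decide⟩⟩
  have hJ11 := hJ {0,1,2,3} ⟨⟨0, by decide⟩, ⟨2, by decide⟩⟩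
  have hJf := hJ Finset.univ ⟨⟨0, by decide⟩, ⟨2, by decide⟩⟩
  simp [Fin.sum_univ_seven, Fin.sum_univ_five, Finset.sum_insert,
    Finset.mem_insert, Finset.mem_singleton, Finset.sum_singleton,
    show ((0:Fin 5).succ.castSucc : Fin 7) = 1 from rfl,
    show ((1:Fin 5).succ.castSucc : Fin 7) = 2 from rfl,
    show ((2:Fin 5).succ.castSucc : Fin 7) = 3 from rfl,
    show ((3:Fin 5).succ.castSucc : Fin 7) = 4 from rfl,
    show ((4:Fin 5).succ.castSucc : Fin 7) = 5 from rfl,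
    show ((Fin.castSucc 1 : Fin 7)) = 1 from rfl,
    show ((Fin.castSucc 2 : Fin 7)) = 2 from rfl,
    show ((Fin.castSucc 3 : Fin 7)) = 3 from rfl,
    show ((Fin.castSucc 4 : Fin 7)) = 4 from rfl,
    show ((Fin.castSucc 5 : Fin 7)) = 5 from rfl] at *
  have h0 : θ 0 = 0 := by omega
  have h1 : θ 1 = 0 := by omega
  have h2 : θ 2 = 0 := by omega
  have h3 : θ 3 = 0 := by omega
  have h4 : θ 4 = 0 := by omega
  have h5 : θ 5 = 0 := by omega
  have h6 : θ 6 = 0 := by omega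
  funext v
  fin_cases v <;> simp <;> assumption
end

section
/- Fix n ≥ 4 and 2 ≤ m ≤ n-2 with 2m ≤ n. For each m-element subset I ⊆ {1,...,n}, let s(I) be an independent uniformly random element of {+,-}. Let M := (1/2)·binomial(2m, m). Then the probability that there is NO partition {1,...,2m} = I₁ ⊔ I₂ into two m-element sets with s(I₁) = s(I₂) = + is at most (3/4)^M. -/
open scoped Classical

/-- Probabilistic estimate (Corollary 3.7): fix `4 ≤ n`, `2 ≤ m ≤ n - 2`, `2m ≤ n`.
Assign to each `m`-element subset `I ⊆ {1,...,n}` an independent uniformly random sign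
`s(I) ∈ {+,-}` (modelled by counting: the uniform measure on all functions
`s : {I : Finset (Fin n) // I.card = m} → Bool`, with `+` as `true`).  Let
`M := (1/2) · binomial(2m, m)`.  Then the probability that there is NO partition
`{1,...,2m} = I₁ ⊔ I₂` into two `m`-element sets with `s(I₁) = s(I₂) = +` is at most
`(3/4)^M`. -/
theorem stmt10 (n m : ℕ) (hn : 4 ≤ n) (hm : 2 ≤ m) (hmn : m ≤ n - 2) (h2m : 2 * m ≤ n) :
    ((Finset.univ.filter
        (fun s : {I : Finset (Fin n) // I.card = m} → Bool =>
          ¬ ∃ I₁ I₂ : {I : Finset (Fin n) // I.card = m},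
            Disjoint I₁.1 I₂.1 ∧
            I₁.1 ∪ I₂.1 = Finset.univ.filter (fun i : Fin n => (i : ℕ) < 2 * m) ∧
            s I₁ = true ∧ s I₂ = true)).card : ℝ) /
      ((Finset.univ : Finset ({I : Finset (Fin n) // I.card = m} → Bool)).card : ℝ)
      ≤ (3 / 4 : ℝ) ^ (Nat.choose (2 * m) m / 2) := by
  classical
  set S : Finset (Fin n) := Finset.univ.filter (fun i : Fin n => (i : ℕ) < 2 * m) with hSdef
  have hn0 : 0 < n := by omega
  have hScard : S.card = 2 * m := by
    have hmap : S = Finset.map ⟨Fin.castLE h2m, Fin.castLE_injective h2m⟩ Finset.univ := by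
      ext i
      simp only [hSdef, Finset.mem_filter, Finset.mem_univ, true_and, Finset.mem_map,
        Function.Embedding.coeFn_mk]
      constructor
      · intro hi; exact ⟨⟨i, hi⟩, Fin.ext rfl⟩
      · rintro ⟨j, rfl⟩; exact j.isLt
    rw [hmap]; simp
  set z : Fin n := ⟨0, hn0⟩ with hzdef
  have hzS : z ∈ S := by
    simp only [hSdef, Finset.mem_filter, Finset.mem_univ, true_and]
    show (0 : ℕ) < 2 * m; omega
  have hcomplcard : ∀ I : Finset (Fin n), I ⊆ S → I.card = m → (S \ I).card = m := by
    intro I hsub hc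
    rw [Finset.card_sdiff_of_subset hsub, hScard, hc]; omega
  set comp : {I : Finset (Fin n) // I.card = m} → {I : Finset (Fin n) // I.card = m} :=
    fun I => if h : I.1 ⊆ S then ⟨S \ I.1, hcomplcard I.1 h I.2⟩ else I with hcompdef
  set A : Finset {I : Finset (Fin n) // I.card = m} :=
    Finset.univ.filter (fun I => I.1 ⊆ S ∧ z ∈ I.1) with hAdef
  set B : Finset {I : Finset (Fin n) // I.card = m} :=
    Finset.univ.filter (fun I => I.1 ⊆ S ∧ z ∉ I.1) with hBdef
  have hdisjAB : Disjoint A B := by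
    rw [Finset.disjoint_left]
    intro x hxA hxB
    rw [hAdef, Finset.mem_filter] at hxA
    rw [hBdef, Finset.mem_filter] at hxB
    exact hxB.2.2 hxA.2.2
  have hunionAB : A ∪ B = Finset.univ.filter (fun I => I.1 ⊆ S) := by
    ext x
    simp only [hAdef, hBdef, Finset.mem_union, Finset.mem_filter, Finset.mem_univ, true_and]
    tauto
  have hcardU : (Finset.univ.filter
      (fun I : {I : Finset (Fin n) // I.card = m} => I.1 ⊆ S)).card = Nat.choose (2 * m) m := by
    rw [← hScard, ← Finset.card_powersetCard]
    apply Finset.card_bij (fun I _ => I.1)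
    · intro a ha
      rw [Finset.mem_filter] at ha
      rw [Finset.mem_powersetCard]
      exact ⟨ha.2, a.2⟩
    · intro a _ b _ h
      exact Subtype.ext h
    · intro J hJ
      rw [Finset.mem_powersetCard] at hJ
      exact ⟨⟨J, hJ.2⟩, by simp [Finset.mem_filter, hJ.1], rfl⟩
  have hcardAB : A.card = B.card := by
    apply Finset.card_bij (fun a _ => comp a)
    · intro a ha
      rw [hAdef, Finset.mem_filter] at ha
      rw [hBdef, Finset.mem_filter]
      rw [hcompdef]
      simp only [dif_pos ha.2.1]
      refine ⟨Finset.mem_univ _, Finset.sdiff_subset, ?_⟩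
      simp [Finset.mem_sdiff, ha.2.2]
    · intro a ha b hb h
      rw [hAdef, Finset.mem_filter] at ha hb
      rw [hcompdef] at h
      simp only [dif_pos ha.2.1, dif_pos hb.2.1] at h
      have h' : S \ a.1 = S \ b.1 := congrArg Subtype.val h
      apply Subtype.ext
      have := congrArg (S \ ·) h'
      simpa [Finset.sdiff_sdiff_eq_self ha.2.1, Finset.sdiff_sdiff_eq_self hb.2.1] using this
    · intro b hb
      rw [hBdef, Finset.mem_filter] at hb
      refine ⟨⟨S \ b.1, hcomplcard b.1 hb.2.1 b.2⟩, ?_, ?_⟩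
      · rw [hAdef, Finset.mem_filter]
        exact ⟨Finset.mem_univ _, Finset.sdiff_subset, Finset.mem_sdiff.2 ⟨hzS, hb.2.2⟩⟩
      · rw [hcompdef]
        simp only [dif_pos (Finset.sdiff_subset : S \ b.1 ⊆ S)]
        exact Subtype.ext (Finset.sdiff_sdiff_eq_self hb.2.1)
  have hchoose : Nat.choose (2 * m) m = 2 * A.card := by
    have := Finset.card_union_of_disjoint hdisjAB
    rw [hunionAB, hcardU, ← hcardAB] at this
    omega
  set M := A.card with hMdef
  set N := Fintype.card {I : Finset (Fin n) // I.card = m} with hNdef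
  have h2MN : 2 * M ≤ N := by
    have : (A ∪ B).card ≤ N := by
      rw [hNdef, ← Finset.card_univ]
      exact Finset.card_le_card (Finset.subset_univ _)
    rw [Finset.card_union_of_disjoint hdisjAB, ← hcardAB] at this
    omega
  set D := Finset.univ.filter
        (fun s : {I : Finset (Fin n) // I.card = m} → Bool =>
          ¬ ∃ I₁ I₂ : {I : Finset (Fin n) // I.card = m},
            Disjoint I₁.1 I₂.1 ∧
            I₁.1 ∪ I₂.1 = S ∧
            s I₁ = true ∧ s I₂ = true) with hDdef
  -- key: for bad s and a ∈ A, not both s a and s (comp a) are true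
  have hnot : ∀ s ∈ D, ∀ a : {I : Finset (Fin n) // I.card = m}, a ∈ A →
      ¬ (s a = true ∧ s (comp a) = true) := by
    intro s hs a ha hboth
    rw [hDdef, Finset.mem_filter] at hs
    rw [hAdef, Finset.mem_filter] at ha
    apply hs.2
    refine ⟨a, comp a, ?_, ?_, hboth.1, hboth.2⟩
    · rw [hcompdef]; simp only [dif_pos ha.2.1]
      exact Finset.disjoint_sdiff
    · rw [hcompdef]; simp only [dif_pos ha.2.1]
      exact Finset.union_sdiff_of_subset ha.2.1
  have hDcard : D.card ≤ 3 ^ M * 2 ^ (N - 2 * M) := by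
    have hcod : Fintype.card
        (({x // x ∈ A} → {p : Bool × Bool // p ≠ (true, true)}) ×
          ({x : {I : Finset (Fin n) // I.card = m} // x ∉ A ∧ x ∉ B} → Bool))
        = 3 ^ M * 2 ^ (N - 2 * M) := by
      rw [Fintype.card_prod, Fintype.card_fun, Fintype.card_fun, Fintype.card_coe]
      have h3 : Fintype.card {p : Bool × Bool // p ≠ (true, true)} = 3 := by decide
      have h2 : Fintype.card Bool = 2 := by decide
      have hrest : Fintype.card {x : {I : Finset (Fin n) // I.card = m} // x ∉ A ∧ x ∉ B}
          = N - 2 * M := by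
        rw [Fintype.card_subtype]
        have : Finset.filter (fun x : {I : Finset (Fin n) // I.card = m} => x ∉ A ∧ x ∉ B)
            Finset.univ = Finset.univ \ (A ∪ B) := by
          ext x; simp [Finset.mem_sdiff]
        rw [this, Finset.card_sdiff_of_subset (Finset.subset_univ _), Finset.card_union_of_disjoint hdisjAB,
          ← hcardAB, Finset.card_univ, ← hNdef]
        omega
      rw [h3, h2, hrest]
    rw [← hcod, ← Finset.card_univ]
    apply Finset.card_le_card_of_injOn (fun s =>
      ((fun a : {x // x ∈ A} =>
        if h : s a.1 = true ∧ s (comp a.1) = true then ⟨(false, false), by decide⟩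
        else ⟨(s a.1, s (comp a.1)), by
          intro heq
          rw [Prod.mk.injEq] at heq
          exact h ⟨heq.1, heq.2⟩⟩),
       fun r => s r.1))
    · intro s _; exact Finset.mem_univ _
    · intro s hs s' hs' heq
      simp only [Finset.mem_coe] at hs hs'
      rw [Prod.mk.injEq] at heq
      funext x
      by_cases hxA : x ∈ A
      · have h1 := congrFun heq.1 ⟨x, hxA⟩
        rw [dif_neg (hnot s hs x hxA), dif_neg (hnot s' hs' x hxA)] at h1
        have := congrArg Subtype.val h1
        rw [Prod.mk.injEq] at this
        exact this.1
      · by_cases hxB : x ∈ B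
        · rw [hBdef, Finset.mem_filter] at hxB
          set a : {I : Finset (Fin n) // I.card = m} :=
            ⟨S \ x.1, hcomplcard x.1 hxB.2.1 x.2⟩ with hadef
          have haA : a ∈ A := by
            rw [hAdef, Finset.mem_filter]
            exact ⟨Finset.mem_univ _, Finset.sdiff_subset, Finset.mem_sdiff.2 ⟨hzS, hxB.2.2⟩⟩
          have hca : comp a = x := by
            rw [hcompdef]
            simp only [dif_pos (Finset.sdiff_subset : S \ x.1 ⊆ S)]
            exact Subtype.ext (by rw [dif_pos (show a.1 ⊆ S from Finset.sdiff_subset)]; exact Finset.sdiff_sdiff_eq_self hxB.2.1)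
          have h1 := congrFun heq.1 ⟨a, haA⟩
          rw [dif_neg (hnot s hs a haA), dif_neg (hnot s' hs' a haA)] at h1
          have := congrArg Subtype.val h1
          rw [Prod.mk.injEq] at this
          rw [← hca]
          exact this.2
        · exact congrFun heq.2 ⟨x, hxA, hxB⟩
  -- final arithmetic
  have hexp : Nat.choose (2 * m) m / 2 = M := by omega
  rw [hexp, Finset.card_univ, Fintype.card_fun, Fintype.card_bool]
  have hpos : (0 : ℝ) < (2 ^ N : ℕ) := by positivity
  rw [div_le_iff₀ hpos]
  have hrhs : (3 / 4 : ℝ) ^ M * ((2 : ℕ) ^ N : ℕ) = 3 ^ M * 2 ^ (N - 2 * M) := by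
    push_cast
    rw [div_pow]
    have h4 : (4 : ℝ) ^ M = 2 ^ (2 * M) := by rw [pow_mul]; norm_num
    have h2N : (2 : ℝ) ^ N = 2 ^ (2 * M) * 2 ^ (N - 2 * M) := by
      rw [← pow_add]; congr 1; omega
    rw [h4, h2N]
    field_simp
  rw [hrhs]
  exact_mod_cast hDcard
end

section
/- Let θ' ∈ ℤ^6 with coordinates indexed by {x,1,2,3,4,y} and let Φ = {β_{i,j} = e_x + e_i + e_j : 1 ≤ i < j ≤ 4}. Define s_{θ'} : Φ → {+,0,-} by the sign of θ'·β. Then for any partition {1,2,3,4} = {i,j} ⊔ {k,ℓ}, it is impossible that s_{θ'}(β_{i,j}) = s_{θ'}(β_{k,ℓ}) = + while s_{θ'}(β_{i,k}) = s_{θ'}(β_{j,ℓ}) = -; consequently the number of functions s : Φ → {+,-} realizable as s_{θ'} for some θ' is at most 64 − 18 = 46. -/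
open scoped Classical

/-- Standard basis vector in `ℤ^6`, coordinates indexed by `{x,1,2,3,4,y} = Fin 6`. -/
def e6 (v : Fin 6) : Fin 6 → ℤ := Pi.single v 1

/-- Standard dot product on `ℤ^6`. -/
def dot6 (θ β : Fin 6 → ℤ) : ℤ := ∑ v, θ v * β v

/-- `β_p := e_x + Σ_{v ∈ p} e_v` for a two-element subset `p ⊆ {1,2,3,4}`. -/
def βof (p : Finset (Fin 6)) : Fin 6 → ℤ := e6 0 + ∑ v ∈ p, e6 v

lemma dot6_add (θ a b : Fin 6 → ℤ) : dot6 θ (a + b) = dot6 θ a + dot6 θ b := by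
  simp [dot6, mul_add, Finset.sum_add_distrib]

lemma dot6_e6 (θ : Fin 6 → ℤ) (v : Fin 6) : dot6 θ (e6 v) = θ v := by
  simp [dot6, e6, Pi.single_apply, mul_ite]

lemma dot6_sum (θ : Fin 6 → ℤ) (p : Finset (Fin 6)) :
    dot6 θ (∑ v ∈ p, e6 v) = ∑ v ∈ p, θ v := by
  classical
  induction p using Finset.induction_on with
  | empty => simp [dot6]
  | insert _ _ h ih => rw [Finset.sum_insert h, dot6_add, dot6_e6, Finset.sum_insert h, ih]

lemma dot6_βof (θ : Fin 6 → ℤ) (p : Finset (Fin 6)) :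
    dot6 θ (βof p) = θ 0 + ∑ v ∈ p, θ v := by
  rw [βof, dot6_add, dot6_e6, dot6_sum]

abbrev S := {p : Finset (Fin 6) // p.card = 2 ∧ p ⊆ ({1, 2, 3, 4} : Finset (Fin 6))}

def Bad (s : S → Bool) : Prop :=
  ∃ p q u v : S, Disjoint p.1 q.1 ∧ Disjoint u.1 v.1 ∧
    s p = true ∧ s q = true ∧ s u = false ∧ s v = false

instance : DecidablePred Bad := by
  intro s; unfold Bad; infer_instance

lemma union_eq (p q : S) (h : Disjoint p.1 q.1) :
    p.1 ∪ q.1 = ({1, 2, 3, 4} : Finset (Fin 6)) := by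
  apply Finset.eq_of_subset_of_card_le (Finset.union_subset p.2.2 q.2.2)
  rw [Finset.card_union_of_disjoint h, p.2.1, q.2.1]
  decide

lemma not_bad_of_realizable (s : S → Bool)
    (hr : ∃ θ' : Fin 6 → ℤ, ∀ p : S,
      (s p = true → 0 < dot6 θ' (βof p.1)) ∧ (s p = false → dot6 θ' (βof p.1) < 0)) :
    ¬ Bad s := by
  rintro ⟨p, q, u, v, hpq, huv, hp, hq, hu, hv⟩
  obtain ⟨θ, hθ⟩ := hr
  have h1 : 0 < dot6 θ (βof p.1) := (hθ p).1 hp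
  have h2 : 0 < dot6 θ (βof q.1) := (hθ q).1 hq
  have h3 : dot6 θ (βof u.1) < 0 := (hθ u).2 hu
  have h4 : dot6 θ (βof v.1) < 0 := (hθ v).2 hv
  have key : dot6 θ (βof p.1) + dot6 θ (βof q.1)
      = dot6 θ (βof u.1) + dot6 θ (βof v.1) := by
    rw [dot6_βof, dot6_βof, dot6_βof, dot6_βof]
    have e1 : ∑ x ∈ p.1, θ x + ∑ x ∈ q.1, θ x = ∑ x ∈ (p.1 ∪ q.1), θ x :=
      (Finset.sum_union hpq).symm
    have e2 : ∑ x ∈ u.1, θ x + ∑ x ∈ v.1, θ x = ∑ x ∈ (u.1 ∪ v.1), θ x :=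
      (Finset.sum_union huv).symm
    rw [union_eq p q hpq] at e1
    rw [union_eq u v huv] at e2
    omega
  linarith

set_option maxHeartbeats 4000000 in
lemma count46 : (Finset.univ.filter (fun s : S → Bool => ¬ Bad s)).card ≤ 46 := by decide

/-- No `θ'` realizes the forbidden sign pattern `s_{θ'}(β_{i,j}) = s_{θ'}(β_{k,ℓ}) = +`,
`s_{θ'}(β_{i,k}) = s_{θ'}(β_{j,ℓ}) = -` (signs via `Int.sign` of the dot product), for any
partition `{1,2,3,4} = {i,j} ⊔ {k,ℓ}`; consequently at most `64 − 18 = 46` of the `64`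
functions `s : Φ → {+,-}` are realizable as `s_{θ'}` for some `θ'`. -/
theorem stmt17 :
    (∀ θ' : Fin 6 → ℤ, ∀ i j k l : Fin 6,
      ({i, j, k, l} : Set (Fin 6)) = {1, 2, 3, 4} →
      (i ≠ j ∧ i ≠ k ∧ i ≠ l ∧ j ≠ k ∧ j ≠ l ∧ k ≠ l) →
      ¬ ((dot6 θ' (e6 0 + e6 i + e6 j)).sign = 1 ∧ (dot6 θ' (e6 0 + e6 k + e6 l)).sign = 1 ∧
         (dot6 θ' (e6 0 + e6 i + e6 k)).sign = -1 ∧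
         (dot6 θ' (e6 0 + e6 j + e6 l)).sign = -1)) ∧
    (Finset.univ.filter
      (fun s : {p : Finset (Fin 6) // p.card = 2 ∧ p ⊆ ({1, 2, 3, 4} : Finset (Fin 6))} → Bool =>
        ∃ θ' : Fin 6 → ℤ,
          ∀ p : {p : Finset (Fin 6) // p.card = 2 ∧ p ⊆ ({1, 2, 3, 4} : Finset (Fin 6))},
            (s p = true → 0 < dot6 θ' (βof p.1)) ∧
            (s p = false → dot6 θ' (βof p.1) < 0))).card ≤ 46 := by
  constructor
  · intro θ i j k l _ _ ⟨h1, h2, h3, h4⟩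
    rw [Int.sign_eq_one_iff_pos] at h1 h2
    rw [Int.sign_eq_neg_one_iff_neg] at h3 h4
    simp only [dot6_add, dot6_e6] at h1 h2 h3 h4
    linarith
  · calc (Finset.univ.filter _).card
        ≤ (Finset.univ.filter (fun s : S → Bool => ¬ Bad s)).card := by
          apply Finset.card_le_card
          intro s hs
          rw [Finset.mem_filter] at hs ⊢
          exact ⟨hs.1, not_bad_of_realizable s hs.2⟩
      _ ≤ 46 := count46
end
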